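/- Let 1 ≤ α < 2 and let σ ∈ L¹(ℝ) with ∫ σ = m and ∫ |σ| = M. Let (p_t)_{t ∈ (0,1]} be a family of bounded measurable functions on ℝ, measurable in (t,x), such that sup_x |p_t(x)| ≤ c t^{−1/α} for all t ∈ (0,1]. For t ∈ (0,1] define q_t(x) = e^{tm} Σ_{n=0}^∞ ((−t)^n/n!) (p_t * σ^{*n})(x), where the n = 0 term is p_t(x). Then there exists a constant C = C(c, m, M, α) such that for every x ∈ ℝ and every t₀ ∈ (0,1]: ∫_0^{t₀} |p_t(x) − e^{−2mt} q_t(x)| dt ≤ C t₀^{2−1/α}. -/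

import Mathlib

open MeasureTheory

/-- Convolution of two functions on `ℝ` (Bochner integral). -/
noncomputable def convolve (f g : ℝ → ℝ) : ℝ → ℝ := fun x => ∫ y, f (x - y) * g y

/-- `convPowFun σ n = σ^{*(n+1)}`, the `(n+1)`-fold convolution power of `σ`. -/
noncomputable def convPowFun (σ : ℝ → ℝ) : ℕ → ℝ → ℝ
  | 0 => σ
  | n + 1 => convolve (convPowFun σ n) σ

/-- `seriesTerm p σ n = p * σ^{*n}`, with the `n = 0` term equal to `p` itself. -/
noncomputable def seriesTerm (p σ : ℝ → ℝ) : ℕ → ℝ → ℝ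
  | 0 => p
  | n + 1 => convolve p (convPowFun σ n)

open scoped Convolution in
lemma convolve_eq (f g : ℝ → ℝ) (x : ℝ) :
    convolve f g x = (f ⋆[ContinuousLinearMap.mul ℝ ℝ, volume] g) x := by
  unfold convolve MeasureTheory.convolution
  rw [← integral_sub_left_eq_self (fun t => (ContinuousLinearMap.mul ℝ ℝ) (f t) (g (x - t))) volume x]
  simp

lemma convolve_integrable {f g : ℝ → ℝ} (hf : Integrable f) (hg : Integrable g) :
    Integrable (convolve f g) := by
  have h := hf.integrable_convolution (ContinuousLinearMap.mul ℝ ℝ) hg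
  exact h.congr (Filter.Eventually.of_forall fun x => (convolve_eq f g x).symm)

lemma convolve_abs_integral_le {f g : ℝ → ℝ} (hf : Integrable f) (hg : Integrable g) :
    ∫ x, |convolve f g x| ≤ (∫ x, |f x|) * (∫ x, |g x|) := by
  have hprod : Integrable (fun q : ℝ × ℝ => f (q.1 - q.2) * g q.2)
      (volume.prod volume) := by
    have h := hg.convolution_integrand (ContinuousLinearMap.mul ℝ ℝ) hf
    simpa [mul_comm] using h
  have h1 : ∫ x, |convolve f g x| ≤ ∫ x, ∫ y, |f (x - y) * g y| := by
    refine integral_mono_of_nonneg (Filter.Eventually.of_forall fun x => abs_nonneg _)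
      hprod.integral_norm_prod_left ?_
    refine Filter.Eventually.of_forall fun x => ?_
    have := norm_integral_le_integral_norm (μ := volume) (fun y => f (x - y) * g y)
    simpa [Real.norm_eq_abs, convolve, abs_mul] using this
  have h2 : ∫ x, ∫ y, |f (x - y) * g y| = ∫ y, ∫ x, |f (x - y) * g y| := by
    apply integral_integral_swap
    exact hprod.norm
  have h3 : ∀ y : ℝ, ∫ x, |f (x - y) * g y| = (∫ x, |f x|) * |g y| := by
    intro y
    simp_rw [abs_mul]
    rw [integral_mul_const, integral_sub_right_eq_self (fun x => |f x|) y]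
  calc ∫ x, |convolve f g x| ≤ ∫ x, ∫ y, |f (x - y) * g y| := h1
    _ = ∫ y, ∫ x, |f (x - y) * g y| := h2
    _ = ∫ y, (∫ x, |f x|) * |g y| := by simp_rw [h3]
    _ = (∫ x, |f x|) * (∫ x, |g x|) := by rw [integral_const_mul]

lemma convPowFun_integrable {σ : ℝ → ℝ} (hσ : Integrable σ) :
    ∀ n, Integrable (convPowFun σ n)
  | 0 => hσ
  | n + 1 => convolve_integrable (convPowFun_integrable hσ n) hσ

lemma convPowFun_abs_le {σ : ℝ → ℝ} (hσ : Integrable σ) :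
    ∀ n, ∫ x, |convPowFun σ n x| ≤ (∫ x, |σ x|) ^ (n + 1) := by
  intro n
  induction n with
  | zero => simp [convPowFun]
  | succ n ih =>
    have h1 := convolve_abs_integral_le (convPowFun_integrable hσ n) hσ
    have hσnn : (0:ℝ) ≤ ∫ x, |σ x| := integral_nonneg fun x => abs_nonneg _
    calc ∫ x, |convPowFun σ (n+1) x| ≤ (∫ x, |convPowFun σ n x|) * (∫ x, |σ x|) := h1
      _ ≤ (∫ x, |σ x|) ^ (n + 1) * (∫ x, |σ x|) :=
        mul_le_mul_of_nonneg_right ih hσnn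
      _ = (∫ x, |σ x|) ^ (n + 2) := by ring

lemma seriesTerm_bound {f σ : ℝ → ℝ} (hσ : Integrable σ) {B : ℝ} (hB : 0 ≤ B)
    (hf : ∀ x, |f x| ≤ B) (n : ℕ) (x : ℝ) :
    |seriesTerm f σ n x| ≤ B * (∫ y, |σ y|) ^ n := by
  cases n with
  | zero => simpa [seriesTerm] using hf x
  | succ n =>
    have hσnn : (0:ℝ) ≤ ∫ y, |σ y| := integral_nonneg fun y => abs_nonneg _
    have hh := convPowFun_integrable hσ n
    have step1 : |seriesTerm f σ (n+1) x| ≤ ∫ y, |f (x - y) * convPowFun σ n y| := by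
      have := norm_integral_le_integral_norm (μ := volume)
        (fun y => f (x - y) * convPowFun σ n y)
      simpa only [seriesTerm, convolve, Real.norm_eq_abs] using this
    have step2 : ∫ y, |f (x - y) * convPowFun σ n y| ≤ ∫ y, B * |convPowFun σ n y| := by
      refine integral_mono_of_nonneg (Filter.Eventually.of_forall fun y => abs_nonneg _)
        (hh.norm.const_mul B) (Filter.Eventually.of_forall fun y => ?_)
      show |f (x - y) * convPowFun σ n y| ≤ B * |convPowFun σ n y|
      rw [abs_mul]
      exact mul_le_mul_of_nonneg_right (hf _) (abs_nonneg _)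
    calc |seriesTerm f σ (n+1) x| ≤ ∫ y, B * |convPowFun σ n y| := step1.trans step2
      _ = B * ∫ y, |convPowFun σ n y| := integral_const_mul B _
      _ ≤ B * (∫ y, |σ y|) ^ (n + 1) :=
        mul_le_mul_of_nonneg_left (convPowFun_abs_le hσ n) hB

lemma abs_exp_sub_one_le' (x : ℝ) : |Real.exp x - 1| ≤ |x| * Real.exp |x| := by
  rcases le_or_gt 0 x with hx | hx
  · rw [abs_of_nonneg hx, abs_of_nonneg (by simpa using Real.one_le_exp hx : (0:ℝ) ≤ Real.exp x - 1)]
    have h1 : 1 - Real.exp (-x) ≤ x := by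
      have := Real.add_one_le_exp (-x)
      linarith
    have : Real.exp x - 1 = Real.exp x * (1 - Real.exp (-x)) := by
      rw [mul_sub, mul_one, ← Real.exp_add]; simp
    rw [this, mul_comm]
    exact mul_le_mul_of_nonneg_right h1 (Real.exp_pos x).le |>.trans_eq rfl |>.trans
      (le_refl _) |>.trans (le_refl _)
  · rw [abs_of_neg hx, abs_of_nonpos (by simpa using Real.exp_le_one_iff.mpr hx.le : Real.exp x - 1 ≤ 0)]
    have h1 : 1 - Real.exp x ≤ -x := by
      have := Real.add_one_le_exp x
      linarith
    have h2 : (1:ℝ) ≤ Real.exp (-x) := Real.one_le_exp (by linarith)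
    calc -(Real.exp x - 1) = 1 - Real.exp x := by ring
      _ ≤ -x := h1
      _ ≤ -x * Real.exp (-x) := le_mul_of_one_le_right (by linarith) h2


/-- One-dimensional comparison of the stable density with the perturbed density
`q_t = e^{tm} Σ_{n≥0} ((-t)^n/n!) (p_t * σ^{*n})`: for `1 ≤ α < 2`,
`σ ∈ L¹(ℝ)` with `∫σ = m`, `∫|σ| = M`, and `sup_x |p_t(x)| ≤ c t^{-1/α}`, there is a
constant `C = C(c,m,M,α)` with
`∫_0^{t₀} |p_t(x) - e^{-2mt} q_t(x)| dt ≤ C t₀^{2-1/α}` for every `x` and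
`t₀ ∈ (0,1]`. -/
theorem one_dim_density_comparison (α : ℝ) (hα1 : 1 ≤ α) (hα2 : α < 2)
    (σ : ℝ → ℝ) (hσint : Integrable σ) (m M : ℝ)
    (hm : (∫ x, σ x) = m) (hM : (∫ x, |σ x|) = M)
    (p : ℝ → ℝ → ℝ) (hmeas : Measurable (Function.uncurry p))
    (c : ℝ) (hc : 0 < c)
    (hbd : ∀ t ∈ Set.Ioc (0 : ℝ) 1, ∀ x : ℝ, |p t x| ≤ c * t ^ (-(1 / α))) :
    ∃ C : ℝ, 0 < C ∧
      ∀ x : ℝ, ∀ t₀ ∈ Set.Ioc (0 : ℝ) 1,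
        (∫⁻ t in Set.Ioc (0 : ℝ) t₀,
          ENNReal.ofReal |p t x - Real.exp (-2 * m * t) *
            (Real.exp (t * m) * ∑' n : ℕ,
              ((-t) ^ n / (n.factorial : ℝ)) * seriesTerm (p t) σ n x)|) ≤
          ENNReal.ofReal (C * t₀ ^ (2 - 1 / α)) := by
  have hαpos : (0:ℝ) < α := lt_of_lt_of_le one_pos hα1
  have hMnn : 0 ≤ M := hM ▸ integral_nonneg fun y => abs_nonneg _
  set E : ℝ := ∑' n : ℕ, M ^ n / n.factorial with hE
  have hEs : Summable (fun n : ℕ => M ^ n / (n.factorial : ℝ)) :=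
    Real.summable_pow_div_factorial M
  have hEnn : 0 ≤ E := tsum_nonneg fun n => by positivity
  set K' : ℝ := c * Real.exp |m| * (|m| + M * E) with hK'
  have hK'nn : 0 ≤ K' := by positivity
  refine ⟨K' + 1, by positivity, ?_⟩
  intro x t₀ ht₀
  obtain ⟨ht₀0, ht₀1⟩ := ht₀
  have hexp_nonneg : 0 ≤ 1 - 1 / α := by
    have : 1 / α ≤ 1 := by
      rw [div_le_one hαpos]; exact hα1
    linarith
  -- pointwise bound
  have key : ∀ t ∈ Set.Ioc (0:ℝ) t₀,
      |p t x - Real.exp (-2 * m * t) * (Real.exp (t * m) * ∑' n : ℕ,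
        ((-t) ^ n / (n.factorial : ℝ)) * seriesTerm (p t) σ n x)| ≤
      K' * t₀ ^ (1 - 1 / α) := by
    rintro t ⟨htpos, htle⟩
    have ht1 : t ≤ 1 := htle.trans ht₀1
    set B : ℝ := c * t ^ (-(1 / α)) with hB
    have hBpos : 0 < B := by
      have := Real.rpow_pos_of_pos htpos (-(1/α))
      positivity
    have hpb : ∀ z : ℝ, |p t z| ≤ B := fun z => hbd t ⟨htpos, ht1⟩ z
    have hst : ∀ n, |seriesTerm (p t) σ n x| ≤ B * M ^ n := by
      intro n
      have := seriesTerm_bound hσint hBpos.le hpb n x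
      rwa [hM] at this
    set a : ℕ → ℝ := fun n => ((-t) ^ n / (n.factorial : ℝ)) * seriesTerm (p t) σ n x
      with ha
    have habs : ∀ n, |a n| ≤ B * ((t * M) ^ n / n.factorial) := by
      intro n
      have h1 : |((-t) ^ n / (n.factorial : ℝ))| = t ^ n / n.factorial := by
        rw [abs_div, abs_pow, abs_neg, abs_of_pos htpos, Nat.abs_cast]
      rw [show a n = ((-t) ^ n / (n.factorial : ℝ)) * seriesTerm (p t) σ n x from rfl,
        abs_mul, h1]
      calc t ^ n / n.factorial * |seriesTerm (p t) σ n x|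
          ≤ t ^ n / n.factorial * (B * M ^ n) :=
            mul_le_mul_of_nonneg_left (hst n) (by positivity)
        _ = B * ((t * M) ^ n / n.factorial) := by rw [mul_pow]; ring
    have hsummand : Summable (fun n : ℕ => B * ((t * M) ^ n / n.factorial)) :=
      (Real.summable_pow_div_factorial (t * M)).mul_left B
    have hsa : Summable a :=
      Summable.of_norm_bounded hsummand (fun n => by
        simpa [Real.norm_eq_abs] using habs n)
    have hsplit : (∑' n, a n) = a 0 + ∑' n, a (n + 1) := Summable.tsum_eq_zero_add hsa
    have ha0 : a 0 = p t x := by simp [ha, seriesTerm]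
    set S : ℝ := ∑' n, a (n + 1) with hS
    have hgs : Summable (fun n : ℕ => (B * t * M) * (M ^ n / n.factorial)) :=
      hEs.mul_left _
    have htail : ∀ n : ℕ, ‖a (n + 1)‖ ≤ (B * t * M) * (M ^ n / n.factorial) := by
      intro n
      have h1 : (t * M) ^ (n + 1) ≤ t * M ^ (n + 1) := by
        rw [mul_pow]
        refine mul_le_mul_of_nonneg_right ?_ (by positivity)
        calc t ^ (n + 1) ≤ t ^ 1 := pow_le_pow_of_le_one htpos.le ht1 (by omega)
          _ = t := pow_one t
      have h2 : ((n.factorial : ℝ)) ≤ ((n + 1).factorial : ℝ) := by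
        exact_mod_cast Nat.factorial_le (Nat.le_succ n)
      have key2 : (t * M) ^ (n + 1) / (((n + 1).factorial : ℝ)) ≤
          (t * M ^ (n + 1)) / (n.factorial : ℝ) := by
        apply div_le_div₀ (by positivity) h1 (by positivity) h2
      calc ‖a (n + 1)‖ = |a (n + 1)| := rfl
        _ ≤ B * ((t * M) ^ (n + 1) / (n + 1).factorial) := habs (n + 1)
        _ ≤ B * ((t * M ^ (n + 1)) / n.factorial) :=
            mul_le_mul_of_nonneg_left key2 hBpos.le
        _ = (B * t * M) * (M ^ n / n.factorial) := by ring
    have htails : Summable (fun n => ‖a (n + 1)‖) :=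
      Summable.of_nonneg_of_le (fun n => norm_nonneg _) htail hgs
    have hSbound : |S| ≤ B * t * M * E := by
      calc |S| ≤ ∑' n, ‖a (n + 1)‖ := norm_tsum_le_tsum_norm htails
        _ ≤ ∑' n : ℕ, (B * t * M) * (M ^ n / n.factorial) :=
            Summable.tsum_le_tsum htail htails hgs
        _ = B * t * M * E := by rw [tsum_mul_left]
    have hexpmul : Real.exp (-2 * m * t) * Real.exp (t * m) = Real.exp (-(m * t)) := by
      rw [← Real.exp_add]; congr 1; ring
    have hrewrite : p t x - Real.exp (-2 * m * t) * (Real.exp (t * m) * ∑' n, a n)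
        = p t x * (1 - Real.exp (-(m * t))) - Real.exp (-(m * t)) * S := by
      rw [hsplit, ha0, ← mul_assoc, hexpmul]; ring
    have hb1 : |1 - Real.exp (-(m * t))| ≤ |m| * t * Real.exp |m| := by
      rw [abs_sub_comm]
      calc |Real.exp (-(m * t)) - 1| ≤ |(-(m * t))| * Real.exp |(-(m * t))| :=
            abs_exp_sub_one_le' _
        _ = |m| * t * Real.exp (|m| * t) := by
            rw [abs_neg, abs_mul, abs_of_pos htpos]
        _ ≤ |m| * t * Real.exp |m| := by
            refine mul_le_mul_of_nonneg_left ?_ (by positivity)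
            exact Real.exp_le_exp.mpr (mul_le_of_le_one_right (abs_nonneg m) ht1)
    have hb2 : Real.exp (-(m * t)) ≤ Real.exp |m| := by
      refine Real.exp_le_exp.mpr ?_
      calc -(m * t) ≤ |m * t| := neg_le_abs _
        _ = |m| * t := by rw [abs_mul, abs_of_pos htpos]
        _ ≤ |m| := mul_le_of_le_one_right (abs_nonneg m) ht1
    have hmain : |p t x - Real.exp (-2 * m * t) * (Real.exp (t * m) * ∑' n, a n)|
        ≤ K' * (t ^ (-(1/α)) * t) := by
      rw [hrewrite]
      calc |p t x * (1 - Real.exp (-(m * t))) - Real.exp (-(m * t)) * S|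
          ≤ |p t x * (1 - Real.exp (-(m * t)))| + |Real.exp (-(m * t)) * S| :=
            abs_sub _ _
        _ = |p t x| * |1 - Real.exp (-(m * t))| + Real.exp (-(m * t)) * |S| := by
            rw [abs_mul, abs_mul, abs_of_pos (Real.exp_pos _)]
        _ ≤ B * (|m| * t * Real.exp |m|) + Real.exp |m| * (B * t * M * E) := by
            refine add_le_add (mul_le_mul (hpb x) hb1 (abs_nonneg _) hBpos.le) ?_
            exact mul_le_mul hb2 hSbound (abs_nonneg _) (Real.exp_pos _).le
        _ = K' * (t ^ (-(1/α)) * t) := by rw [hB, hK']; ring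
    have htr : t ^ (-(1/α)) * t = t ^ (1 - 1/α) := by
      nth_rewrite 2 [← Real.rpow_one t]
      rw [← Real.rpow_add htpos]
      congr 1; ring
    have hmono : t ^ (1 - 1/α) ≤ t₀ ^ (1 - 1/α) :=
      Real.rpow_le_rpow htpos.le htle hexp_nonneg
    calc |p t x - Real.exp (-2 * m * t) * (Real.exp (t * m) * ∑' n, a n)|
        ≤ K' * (t ^ (-(1/α)) * t) := hmain
      _ = K' * t ^ (1 - 1/α) := by rw [htr]
      _ ≤ K' * t₀ ^ (1 - 1/α) := mul_le_mul_of_nonneg_left hmono hK'nn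
  -- integrate
  have hpow_nonneg : (0:ℝ) ≤ t₀ ^ (1 - 1/α) := Real.rpow_nonneg ht₀0.le _
  calc (∫⁻ t in Set.Ioc (0 : ℝ) t₀,
        ENNReal.ofReal |p t x - Real.exp (-2 * m * t) *
          (Real.exp (t * m) * ∑' n : ℕ,
            ((-t) ^ n / (n.factorial : ℝ)) * seriesTerm (p t) σ n x)|)
      ≤ ∫⁻ _ in Set.Ioc (0 : ℝ) t₀, ENNReal.ofReal (K' * t₀ ^ (1 - 1/α)) := by
        refine setLIntegral_mono measurable_const fun t ht => ?_
        exact ENNReal.ofReal_le_ofReal (key t ht)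
    _ = ENNReal.ofReal (K' * t₀ ^ (1 - 1/α)) * volume (Set.Ioc (0:ℝ) t₀) :=
        setLIntegral_const _ _
    _ = ENNReal.ofReal (K' * t₀ ^ (1 - 1/α)) * ENNReal.ofReal t₀ := by
        rw [Real.volume_Ioc, sub_zero]
    _ = ENNReal.ofReal (K' * t₀ ^ (1 - 1/α) * t₀) :=
        (ENNReal.ofReal_mul (by positivity)).symm
    _ ≤ ENNReal.ofReal ((K' + 1) * t₀ ^ (2 - 1 / α)) := by
        refine ENNReal.ofReal_le_ofReal ?_
        have htr : t₀ ^ (1 - 1/α) * t₀ = t₀ ^ (2 - 1/α) := by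
          nth_rewrite 2 [← Real.rpow_one t₀]
          rw [← Real.rpow_add ht₀0]
          congr 1; ring
        rw [mul_assoc, htr]
        have : (0:ℝ) ≤ t₀ ^ (2 - 1/α) := Real.rpow_nonneg ht₀0.le _
        nlinarith
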